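/- Let S = ℂ[x, y_1,…,y_p], let a ≥ 1, let H be a nonzero homogeneous polynomial of degree d − a in the y-variables only, and let K be a homogeneous polynomial of degree d in the y-variables only. If F = x^a·H + K is nonzero, then the Waring rank satisfies r(F) ≥ al(H). -/

import Mathlib

open MvPolynomial

/-- The iterated partial derivative `∂^m` applied to `F`: on a monomial `x^k` it gives
`(∏ᵢ kᵢ(kᵢ-1)⋯(kᵢ-mᵢ+1)) · x^(k-m)`, i.e. each dual variable `αᵢ` acts as `∂/∂xᵢ`. -/
noncomputable def mderiv {σ : Type*} (m : σ →₀ ℕ) (F : MvPolynomial σ ℂ) :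
    MvPolynomial σ ℂ :=
  (AddMonoidAlgebra.coeff F).sum fun k c =>
    MvPolynomial.monomial (k - m) (c * ∏ i ∈ m.support, (Nat.descFactorial (k i) (m i) : ℂ))

/-- The apolarity action `Θ ∘ F` of a polynomial `Θ` in the dual variables on `F`,
as a constant-coefficient differential operator. -/
noncomputable def diffOp {σ : Type*} (Θ F : MvPolynomial σ ℂ) : MvPolynomial σ ℂ :=
  (AddMonoidAlgebra.coeff Θ).sum fun m c => c • mderiv m F

/-- Apolar length `al F`: the dimension of the space `Diff(F) = {Θ ∘ F : Θ ∈ T}` of all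
partial derivatives of `F` of all orders (including `F` itself). -/
noncomputable def apolarLength {σ : Type*} (F : MvPolynomial σ ℂ) : ℕ :=
  Module.finrank ℂ (Submodule.span ℂ (Set.range fun Θ => diffOp Θ F))

/-- The Hilbert function of the apolar algebra of `F`: the dimension of the span of the
`i`-th order partial derivatives `{Θ ∘ F : Θ homogeneous of degree i}`. -/
noncomputable def hilbFn {σ : Type*} (F : MvPolynomial σ ℂ) (i : ℕ) : ℕ :=
  Module.finrank ℂ (Submodule.span ℂ
    {G : MvPolynomial σ ℂ | ∃ Θ : MvPolynomial σ ℂ, Θ.IsHomogeneous i ∧ diffOp Θ F = G})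

/-- Waring rank of a degree-`d` form: the least `r` such that
`F = c₁ ℓ₁^d + ⋯ + c_r ℓ_r^d` for linear forms `ℓᵢ` and scalars `cᵢ ∈ ℂ`. -/
noncomputable def waringRank {σ : Type*} [Fintype σ] (d : ℕ) (F : MvPolynomial σ ℂ) : ℕ :=
  sInf {r : ℕ | ∃ (c : Fin r → ℂ) (v : Fin r → σ → ℂ),
    F = ∑ i, c i • (∑ j, v i j • MvPolynomial.X j) ^ d}

section Aux

variable {σ : Type*}

lemma nat_descFactorial_split (k t : ℕ) : ∀ s : ℕ,
    k.descFactorial (s + t) = (k - t).descFactorial s * k.descFactorial t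
  | 0 => by simp
  | (s+1) => by
    have h : k - (s + t) = k - t - s := by omega
    rw [show s + 1 + t = (s + t) + 1 from by omega, Nat.descFactorial_succ,
      nat_descFactorial_split k t s, Nat.descFactorial_succ, h, mul_assoc]

lemma coeff_mderiv (m : σ →₀ ℕ) (F : MvPolynomial σ ℂ) (n : σ →₀ ℕ) :
    coeff n (mderiv m F) =
      (∏ i ∈ m.support, (Nat.descFactorial ((n + m) i) (m i) : ℂ)) * coeff (n + m) F := by
  classical
  unfold mderiv
  rw [MvPolynomial.sum_def, coeff_sum]
  rw [Finset.sum_eq_single (n + m)]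
  · rw [coeff_monomial, add_tsub_cancel_right, if_pos rfl, mul_comm]
  · intro k hk hkne
    rw [coeff_monomial]
    by_cases hkm : k - m = n
    · rw [if_pos hkm]
      -- k ≠ n + m but k - m = n : some coordinate has k i < m i
      have : ∃ i, k i < m i := by
        by_contra hc
        push_neg at hc
        apply hkne
        ext i
        have h2 := DFunLike.congr_fun hkm i
        rw [Finsupp.tsub_apply] at h2
        have h3 := hc i
        simp only [Finsupp.coe_add, Pi.add_apply]
        omega
      obtain ⟨i, hi⟩ := this
      have hisupp : i ∈ m.support := by
        rw [Finsupp.mem_support_iff]; omega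
      have : (Nat.descFactorial (k i) (m i) : ℂ) = 0 := by
        rw [Nat.descFactorial_eq_zero_iff_lt.mpr hi]; simp
      rw [Finset.prod_eq_zero hisupp this, mul_zero]
    · rw [if_neg hkm]
  · intro h
    rw [MvPolynomial.notMem_support_iff] at h
    rw [h, zero_mul, map_zero, coeff_zero]

lemma mderiv_add (m : σ →₀ ℕ) (F G : MvPolynomial σ ℂ) :
    mderiv m (F + G) = mderiv m F + mderiv m G := by
  ext n; simp [coeff_mderiv, coeff_add, mul_add]

lemma mderiv_smul (m : σ →₀ ℕ) (t : ℂ) (F : MvPolynomial σ ℂ) :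
    mderiv m (t • F) = t • mderiv m F := by
  ext n; simp [coeff_mderiv, coeff_smul]; ring

lemma mderiv_zero (m : σ →₀ ℕ) : mderiv m (0 : MvPolynomial σ ℂ) = 0 := by
  ext n; simp [coeff_mderiv]

lemma mderiv_zero_exp (F : MvPolynomial σ ℂ) : mderiv (0 : σ →₀ ℕ) F = F := by
  ext n; simp [coeff_mderiv]

lemma mderiv_mderiv (m m' : σ →₀ ℕ) (F : MvPolynomial σ ℂ) :
    mderiv m (mderiv m' F) = mderiv (m + m') F := by
  classical
  ext n
  rw [coeff_mderiv, coeff_mderiv, coeff_mderiv, ← mul_assoc, add_assoc]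
  congr 1
  have hsub : (m + m').support ⊆ m.support ∪ m'.support := Finsupp.support_add
  have e1 : (∏ i ∈ m.support, (Nat.descFactorial ((n + m) i) (m i) : ℂ)) =
      ∏ i ∈ m.support ∪ m'.support, (Nat.descFactorial ((n + m) i) (m i) : ℂ) := by
    refine Finset.prod_subset Finset.subset_union_left ?_
    intro i _ hi
    rw [Finsupp.notMem_support_iff] at hi
    simp [hi]
  have e2 : (∏ i ∈ m'.support, (Nat.descFactorial ((n + (m + m')) i) (m' i) : ℂ)) =
      ∏ i ∈ m.support ∪ m'.support, (Nat.descFactorial ((n + (m + m')) i) (m' i) : ℂ) := by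
    refine Finset.prod_subset Finset.subset_union_right ?_
    intro i _ hi
    rw [Finsupp.notMem_support_iff] at hi
    simp [hi]
  have e3 : (∏ i ∈ (m + m').support, (Nat.descFactorial ((n + (m + m')) i) ((m + m') i) : ℂ)) =
      ∏ i ∈ m.support ∪ m'.support, (Nat.descFactorial ((n + (m + m')) i) ((m + m') i) : ℂ) := by
    refine Finset.prod_subset hsub ?_
    intro i _ hi
    rw [Finsupp.notMem_support_iff] at hi
    simp [hi]
  rw [e1, e2, e3, ← Finset.prod_mul_distrib]
  apply Finset.prod_congr rfl
  intro i _
  rw [← Nat.cast_mul]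
  congr 1
  simp only [Finsupp.coe_add, Pi.add_apply, ← add_assoc]
  rw [nat_descFactorial_split (n i + m i + m' i) (m' i) (m i), Nat.add_sub_cancel]

section Chunk2
variable {σ : Type*}

lemma diffOp_monomial (m : σ →₀ ℕ) (c : ℂ) (F : MvPolynomial σ ℂ) :
    diffOp (monomial m c) F = c • mderiv m F := by
  unfold diffOp
  rw [MvPolynomial.sum_monomial_eq]
  rw [zero_smul]

lemma diffOp_add_left (Θ₁ Θ₂ F : MvPolynomial σ ℂ) :
    diffOp (Θ₁ + Θ₂) F = diffOp Θ₁ F + diffOp Θ₂ F := by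
  unfold diffOp
  rw [AddMonoidAlgebra.coeff_add]
  exact Finsupp.sum_add_index' (fun m => zero_smul _ _) (fun m c c' => add_smul _ _ _)

lemma diffOp_smul_left (t : ℂ) (Θ F : MvPolynomial σ ℂ) :
    diffOp (t • Θ) F = t • diffOp Θ F := by
  induction Θ using MvPolynomial.induction_on' with
  | add p q hp hq => rw [smul_add, diffOp_add_left, hp, hq, diffOp_add_left, smul_add]
  | monomial m c => rw [MvPolynomial.smul_monomial, diffOp_monomial, diffOp_monomial, smul_eq_mul, mul_smul]

lemma diffOp_right_add (Θ F G : MvPolynomial σ ℂ) :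
    diffOp Θ (F + G) = diffOp Θ F + diffOp Θ G := by
  unfold diffOp
  simp only [mderiv_add, smul_add]
  exact Finsupp.sum_add

lemma diffOp_right_smul (Θ : MvPolynomial σ ℂ) (t : ℂ) (F : MvPolynomial σ ℂ) :
    diffOp Θ (t • F) = t • diffOp Θ F := by
  unfold diffOp
  simp only [mderiv_smul, smul_comm _ t]
  rw [Finsupp.smul_sum]

lemma diffOp_right_zero (Θ : MvPolynomial σ ℂ) : diffOp Θ (0 : MvPolynomial σ ℂ) = 0 := by
  unfold diffOp
  simp only [mderiv_zero, smul_zero]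
  exact Finset.sum_const_zero

lemma diffOp_right_sum {ι : Type*} (Θ : MvPolynomial σ ℂ) (s : Finset ι)
    (f : ι → MvPolynomial σ ℂ) :
    diffOp Θ (∑ i ∈ s, f i) = ∑ i ∈ s, diffOp Θ (f i) := by
  classical
  induction s using Finset.induction_on with
  | empty => simp [diffOp_right_zero]
  | insert _ _ h ih => rw [Finset.sum_insert h, Finset.sum_insert h, diffOp_right_add, ih]

lemma diffOp_mul (Θ₁ Θ₂ F : MvPolynomial σ ℂ) :
    diffOp (Θ₁ * Θ₂) F = diffOp Θ₁ (diffOp Θ₂ F) := by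
  induction Θ₁ using MvPolynomial.induction_on' with
  | add p q hp hq => rw [add_mul, diffOp_add_left, hp, hq, diffOp_add_left]
  | monomial m c =>
    induction Θ₂ using MvPolynomial.induction_on' with
    | add p q hp hq =>
      rw [mul_add, diffOp_add_left, hp, hq, diffOp_add_left, diffOp_right_add]
    | monomial m' c' =>
      simp [monomial_mul, diffOp_monomial, mderiv_smul, mderiv_mderiv, smul_smul, mul_comm]

lemma mderiv_monomial (m k : σ →₀ ℕ) (c : ℂ) :
    mderiv m (monomial k c) =
      monomial (k - m) (c * ∏ i ∈ m.support, (Nat.descFactorial (k i) (m i) : ℂ)) := by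
  unfold mderiv
  rw [MvPolynomial.sum_monomial_eq]
  rw [zero_mul, map_zero]

lemma mderiv_single_pderiv (j : σ) (F : MvPolynomial σ ℂ) :
    mderiv (Finsupp.single j 1) F = MvPolynomial.pderiv j F := by
  classical
  induction F using MvPolynomial.induction_on' with
  | add p q hp hq => rw [mderiv_add, map_add, hp, hq]
  | monomial k c =>
    rw [mderiv_monomial, pderiv_monomial, Finsupp.support_single_ne_zero j one_ne_zero,
      Finset.prod_singleton, Finsupp.single_eq_same, Nat.descFactorial_one]

lemma pderiv_linear [Fintype σ] (v : σ → ℂ) (j : σ) :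
    MvPolynomial.pderiv j (∑ i, v i • X i) = C (v j) := by
  classical
  rw [map_sum, Finset.sum_eq_single j]
  · rw [smul_eq_C_mul, pderiv_C_mul, pderiv_X_self, mul_one]
  · intro b _ hb
    rw [smul_eq_C_mul, pderiv_C_mul, pderiv_X_of_ne hb, mul_zero]
  · intro h
    exact absurd (Finset.mem_univ j) h

end Chunk2

section Chunk3
variable {σ : Type*}

lemma nat_descFactorial_peel (d N : ℕ) :
    d.descFactorial (N + 1) = d * (d - 1).descFactorial N := by
  cases d with
  | zero => rw [Nat.zero_descFactorial_succ, zero_mul]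
  | succ n => rw [Nat.succ_descFactorial_succ]; rfl

lemma finsupp_sum_single_fintype [Fintype σ] (j : σ) (n : ℕ) :
    ∑ i, (Finsupp.single j n) i = n := by
  classical
  rw [Finset.sum_eq_single j]
  · exact Finsupp.single_eq_same
  · intro b _ hb; exact Finsupp.single_eq_of_ne' (Ne.symm hb)
  · intro h; exact absurd (Finset.mem_univ j) h

lemma mderiv_pow_linear [Fintype σ] (v : σ → ℂ) : ∀ (N : ℕ) (m : σ →₀ ℕ),
    (∑ i, m i) = N → ∀ d : ℕ,
    mderiv m ((∑ j, v j • X j) ^ d) =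
      (Nat.descFactorial d N : ℂ) •
        ((∏ i, v i ^ m i) • (∑ j, v j • X j) ^ (d - N)) := by
  classical
  intro N
  induction N with
  | zero =>
    intro m hm d
    have hm0 : m = 0 := by
      ext i
      have := Finset.sum_eq_zero_iff.mp hm i (Finset.mem_univ i)
      simpa using this
    subst hm0
    simp [mderiv_zero_exp]
  | succ N ih =>
    intro m hm d
    have hj : ∃ j, m j ≠ 0 := by
      by_contra hc
      push_neg at hc
      rw [Finset.sum_eq_zero (fun i _ => hc i)] at hm
      exact Nat.succ_ne_zero N hm.symm
    obtain ⟨j, hj⟩ := hj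
    set m' := m - Finsupp.single j 1 with hm'
    have hmm : m = m' + Finsupp.single j 1 := by
      ext i
      rw [hm']
      simp only [Finsupp.coe_add, Pi.add_apply, Finsupp.tsub_apply]
      rcases eq_or_ne i j with rfl | hij
      · rw [Finsupp.single_eq_same]; omega
      · rw [Finsupp.single_eq_of_ne' (Ne.symm hij)]; omega
    have hpt : ∀ i, m i = m' i + (Finsupp.single j 1) i := by
      intro i
      have h0 := DFunLike.congr_fun hmm i
      rwa [Finsupp.add_apply] at h0
    have hsum' : (∑ i, m' i) = N := by
      have h1 : (∑ i, m i) = (∑ i, m' i) + ∑ i, (Finsupp.single j 1) i := by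
        rw [← Finset.sum_add_distrib]
        exact Finset.sum_congr rfl fun i _ => hpt i
      rw [finsupp_sum_single_fintype] at h1
      omega
    have hprod : (∏ i, v i ^ m i) = v j * ∏ i, v i ^ m' i := by
      have h3 : ∀ i, v i ^ m i = v i ^ m' i * v i ^ (Finsupp.single j 1) i := by
        intro i; rw [← pow_add, ← hpt i]
      rw [Finset.prod_congr rfl (fun i _ => h3 i), Finset.prod_mul_distrib]
      have h2 : (∏ i, v i ^ (Finsupp.single j 1) i) = v j := by
        rw [Finset.prod_eq_single j]
        · rw [Finsupp.single_eq_same, pow_one]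
        · intro b _ hb; rw [Finsupp.single_eq_of_ne' (Ne.symm hb), pow_zero]
        · intro h; exact absurd (Finset.mem_univ j) h
      rw [h2, mul_comm]
    conv_lhs => rw [hmm]
    rw [← mderiv_mderiv, mderiv_single_pderiv, pderiv_pow, pderiv_linear]
    have hC : ((d : MvPolynomial σ ℂ) * (∑ i, v i • X i) ^ (d - 1) * C (v j))
        = ((d : ℂ) * v j) • (∑ i, v i • X i) ^ (d - 1) := by
      rw [MvPolynomial.smul_eq_C_mul, map_mul, map_natCast]
      ring
    rw [hC, mderiv_smul, ih m' hsum' (d - 1), nat_descFactorial_peel, hprod]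
    have hd : d - 1 - N = d - (N + 1) := by omega
    rw [hd, smul_smul, smul_smul, smul_smul]
    congr 1
    push_cast
    ring
end Chunk3

section Chunk4
variable {σ τ : Type*}

lemma mapDomain_tsub {f : σ → τ} (hf : Function.Injective f) (k m : σ →₀ ℕ) :
    Finsupp.mapDomain f k - Finsupp.mapDomain f m = Finsupp.mapDomain f (k - m) := by
  classical
  let fe : σ ↪ τ := ⟨f, hf⟩
  have hfe : f = ⇑fe := rfl
  rw [hfe, ← Finsupp.embDomain_eq_mapDomain fe, ← Finsupp.embDomain_eq_mapDomain fe,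
    ← Finsupp.embDomain_eq_mapDomain fe]
  ext x
  rw [Finsupp.tsub_apply]
  by_cases hx : x ∈ Set.range f
  · obtain ⟨a, rfl⟩ := hx
    rw [show f a = fe a from rfl, Finsupp.embDomain_apply_self, Finsupp.embDomain_apply_self,
      Finsupp.embDomain_apply_self, Finsupp.tsub_apply]
  · rw [Finsupp.embDomain_notin_range _ _ _ hx, Finsupp.embDomain_notin_range _ _ _ hx,
      Finsupp.embDomain_notin_range _ _ _ hx]
    simp

lemma mderiv_rename {f : σ → τ} (hf : Function.Injective f) (m : σ →₀ ℕ)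
    (G : MvPolynomial σ ℂ) :
    mderiv (Finsupp.mapDomain f m) (rename f G) = rename f (mderiv m G) := by
  classical
  induction G using MvPolynomial.induction_on' with
  | add p q hp hq => rw [map_add, mderiv_add, hp, hq, mderiv_add, map_add]
  | monomial k c =>
    rw [rename_monomial, mderiv_monomial, mderiv_monomial, rename_monomial,
      mapDomain_tsub hf]
    congr 1
    let fe : σ ↪ τ := ⟨f, hf⟩
    have hfe : f = ⇑fe := rfl
    rw [hfe, ← Finsupp.embDomain_eq_mapDomain fe, Finsupp.support_embDomain, Finset.prod_map]
    congr 1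
    apply Finset.prod_congr rfl
    intro i _
    have h1 : Finsupp.embDomain fe k (fe i) = k i := Finsupp.embDomain_apply_self _ _ _
    have h2 : Finsupp.embDomain fe m (fe i) = m i := Finsupp.embDomain_apply_self _ _ _
    rw [← Finsupp.embDomain_eq_mapDomain fe, h1, h2]

lemma diffOp_rename {f : σ → τ} (hf : Function.Injective f) (Θ G : MvPolynomial σ ℂ) :
    diffOp (rename f Θ) (rename f G) = rename f (diffOp Θ G) := by
  induction Θ using MvPolynomial.induction_on' with
  | add p q hp hq => rw [map_add, diffOp_add_left, hp, hq, diffOp_add_left, map_add]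
  | monomial m c =>
    rw [rename_monomial, diffOp_monomial, diffOp_monomial, map_smul, mderiv_rename hf]

/-- `diffOp · F` as a linear map. -/
noncomputable def DOpL (F : MvPolynomial σ ℂ) : MvPolynomial σ ℂ →ₗ[ℂ] MvPolynomial σ ℂ where
  toFun Θ := diffOp Θ F
  map_add' Θ₁ Θ₂ := diffOp_add_left Θ₁ Θ₂ F
  map_smul' t Θ := diffOp_smul_left t Θ F

lemma span_range_diffOp (F : MvPolynomial σ ℂ) :
    Submodule.span ℂ (Set.range fun Θ => diffOp Θ F) = LinearMap.range (DOpL F) := by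
  rw [show (Set.range fun Θ => diffOp Θ F) = ↑(LinearMap.range (DOpL F)) by
    rw [LinearMap.coe_range]; rfl, Submodule.span_eq]

lemma apolarLength_eq (F : MvPolynomial σ ℂ) :
    apolarLength F = Module.finrank ℂ (LinearMap.range (DOpL F)) := by
  unfold apolarLength
  rw [span_range_diffOp]

lemma degree_eq_fintype_sum [Fintype σ] (m : σ →₀ ℕ) : Finsupp.degree m = ∑ i, m i :=
  Finset.sum_subset (Finset.subset_univ _) fun i _ hi => Finsupp.notMem_support_iff.mp hi

lemma isHom_support_deg [Fintype σ] {Θ : MvPolynomial σ ℂ} {n : ℕ} (h : Θ.IsHomogeneous n)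
    {m : σ →₀ ℕ} (hm : coeff m Θ ≠ 0) : ∑ i, m i = n := by
  have h1 := h hm
  rw [← degree_eq_fintype_sum]
  rw [Finsupp.degree_eq_weight_one]
  exact h1

/-- derivative of a homogeneous polynomial by a too-high monomial is 0 -/
lemma mderiv_eq_zero_of_degree_lt [Fintype σ] {G : MvPolynomial σ ℂ} {e : ℕ}
    (hG : G.IsHomogeneous e) {m : σ →₀ ℕ} (hm : e < ∑ i, m i) :
    mderiv m G = 0 := by
  ext n
  rw [coeff_mderiv, coeff_zero]
  rcases eq_or_ne (coeff (n + m) G) 0 with h | h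
  · rw [h, mul_zero]
  · exfalso
    have := isHom_support_deg hG h
    have h2 : (∑ i, (n + m) i) = (∑ i, n i) + ∑ i, m i := by
      rw [← Finset.sum_add_distrib]
      exact Finset.sum_congr rfl fun i _ => rfl
    omega

end Chunk4

section Chunk5
variable {p : ℕ}

lemma coeff_rename_succ_eq_zero {G : MvPolynomial (Fin p) ℂ} {k : Fin (p+1) →₀ ℕ}
    (hk : k 0 ≠ 0) : coeff k (rename Fin.succ G) = 0 := by
  by_contra h
  obtain ⟨u, hu, -⟩ := coeff_rename_ne_zero _ _ _ h
  apply hk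
  rw [← hu]
  exact Finsupp.mapDomain_notin_range _ _ (by
    rintro ⟨j, hj⟩
    exact (Fin.succ_ne_zero j) hj)

lemma mapDomain_succ_apply_zero (u : Fin p →₀ ℕ) :
    Finsupp.mapDomain Fin.succ u 0 = 0 :=
  Finsupp.mapDomain_notin_range _ _ (by rintro ⟨j, hj⟩; exact (Fin.succ_ne_zero j) hj)

lemma mderiv_rename_succ_eq_zero {G : MvPolynomial (Fin p) ℂ} {m : Fin (p+1) →₀ ℕ}
    (hm : m 0 ≠ 0) : mderiv m (rename Fin.succ G) = 0 := by
  ext n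
  rw [coeff_mderiv, coeff_zero, coeff_rename_succ_eq_zero (by
    simp only [Finsupp.coe_add, Pi.add_apply]; omega), mul_zero]

lemma mderiv_single0_xpow_mul (A b : ℕ) (G : MvPolynomial (Fin p) ℂ) :
    mderiv (Finsupp.single 0 b) ((X 0 : MvPolynomial (Fin (p+1)) ℂ) ^ A * rename Fin.succ G)
      = (Nat.descFactorial A b : ℂ) •
        ((X 0 : MvPolynomial (Fin (p+1)) ℂ) ^ (A - b) * rename Fin.succ G) := by
  classical
  induction G using MvPolynomial.induction_on' with
  | add q r hq hr => rw [map_add, mul_add, mderiv_add, hq, hr, mul_add, smul_add]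
  | monomial u c =>
    rw [rename_monomial, X_pow_eq_monomial, X_pow_eq_monomial, monomial_mul, monomial_mul,
      mderiv_monomial, MvPolynomial.smul_monomial]
    have hexp : (Finsupp.single (0 : Fin (p+1)) A + Finsupp.mapDomain Fin.succ u)
          - Finsupp.single 0 b
        = Finsupp.single (0 : Fin (p+1)) (A - b) + Finsupp.mapDomain Fin.succ u := by
      ext x
      rw [Finsupp.tsub_apply, Finsupp.add_apply, Finsupp.add_apply]
      cases x using Fin.cases with
      | zero =>
        rw [Finsupp.single_eq_same, Finsupp.single_eq_same, Finsupp.single_eq_same,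
          mapDomain_succ_apply_zero]
        omega
      | succ j =>
        rw [Finsupp.single_eq_of_ne' (Fin.succ_ne_zero j).symm,
          Finsupp.single_eq_of_ne' (Fin.succ_ne_zero j).symm,
          Finsupp.single_eq_of_ne' (Fin.succ_ne_zero j).symm]
        omega
    have hcoef : (∏ i ∈ (Finsupp.single (0 : Fin (p+1)) b).support,
        (Nat.descFactorial ((Finsupp.single (0 : Fin (p+1)) A + Finsupp.mapDomain Fin.succ u) i)
          ((Finsupp.single (0 : Fin (p+1)) b) i) : ℂ)) = (Nat.descFactorial A b : ℂ) := by
      rcases Nat.eq_zero_or_pos b with rfl | hb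
      · rw [Finsupp.single_zero, Finsupp.support_zero, Finset.prod_empty,
          Nat.descFactorial_zero, Nat.cast_one]
      · rw [Finsupp.support_single_ne_zero _ hb.ne', Finset.prod_singleton,
          Finsupp.single_eq_same, Finsupp.add_apply, Finsupp.single_eq_same,
          mapDomain_succ_apply_zero, Nat.add_zero]
    rw [hexp, hcoef]
    congr 1
    rw [smul_eq_mul]
    ring
end Chunk5

section Chunk6
variable {p d a : ℕ} {H K : MvPolynomial (Fin p) ℂ} {F : MvPolynomial (Fin (p+1)) ℂ}

lemma mderiv_a_F (ha : 1 ≤ a)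
    (hF : F = X 0 ^ a * rename Fin.succ H + rename Fin.succ K) :
    mderiv (Finsupp.single 0 a) F = (a.factorial : ℂ) • rename Fin.succ H := by
  rw [hF, mderiv_add, mderiv_single0_xpow_mul,
    mderiv_rename_succ_eq_zero (by rw [Finsupp.single_eq_same]; omega),
    Nat.descFactorial_self, Nat.sub_self, pow_zero, one_mul, add_zero]

lemma mderiv_a1_F (hF : F = X 0 ^ a * rename Fin.succ H + rename Fin.succ K) :
    mderiv (Finsupp.single 0 (a+1)) F = 0 := by
  rw [hF, mderiv_add, mderiv_single0_xpow_mul,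
    mderiv_rename_succ_eq_zero (by rw [Finsupp.single_eq_same]; omega),
    Nat.descFactorial_eq_zero_iff_lt.mpr (Nat.lt_succ_self a)]
  simp

lemma diffOp_xpow_a (ha : 1 ≤ a)
    (hF : F = X 0 ^ a * rename Fin.succ H + rename Fin.succ K) (Ψ : MvPolynomial (Fin (p+1)) ℂ) :
    diffOp (X 0 ^ a * Ψ) F = (a.factorial : ℂ) • diffOp Ψ (rename Fin.succ H) := by
  rw [mul_comm, diffOp_mul, X_pow_eq_monomial, diffOp_monomial, one_smul, mderiv_a_F ha hF,
    diffOp_right_smul]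

lemma diffOp_xpow_a1 (hF : F = X 0 ^ a * rename Fin.succ H + rename Fin.succ K)
    (Ψ : MvPolynomial (Fin (p+1)) ℂ) :
    diffOp (X 0 ^ (a+1) * Ψ) F = 0 := by
  rw [mul_comm, diffOp_mul, X_pow_eq_monomial, diffOp_monomial, one_smul, mderiv_a1_F hF,
    diffOp_right_zero]

/-- rename as a linear map -/
noncomputable def renSucc (p : ℕ) : MvPolynomial (Fin p) ℂ →ₗ[ℂ] MvPolynomial (Fin (p+1)) ℂ :=
  (MvPolynomial.rename (Fin.succ : Fin p → Fin (p+1)) :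
    MvPolynomial (Fin p) ℂ →ₐ[ℂ] MvPolynomial (Fin (p+1)) ℂ).toLinearMap

lemma renSucc_apply (G : MvPolynomial (Fin p) ℂ) : renSucc p G = rename Fin.succ G := rfl

lemma range_DOpL_rename :
    LinearMap.range (DOpL (rename Fin.succ H)) =
      Submodule.map (renSucc p) (LinearMap.range (DOpL H)) := by
  classical
  apply le_antisymm
  · rintro y ⟨Θ, rfl⟩
    show diffOp Θ (rename Fin.succ H) ∈ _
    rw [diffOp, MvPolynomial.sum_def]
    apply Submodule.sum_mem
    intro m hm
    by_cases hm0 : m 0 = 0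
    · set m' := Finsupp.comapDomain Fin.succ m ((Fin.succ_injective p).injOn) with hm'
      have hmap : Finsupp.mapDomain Fin.succ m' = m := by
        ext x
        cases x using Fin.cases with
        | zero => rw [mapDomain_succ_apply_zero, hm0]
        | succ j =>
          rw [Finsupp.mapDomain_apply (Fin.succ_injective p), hm', Finsupp.comapDomain_apply]
      rw [← hmap, mderiv_rename (Fin.succ_injective p)]
      refine Submodule.smul_mem _ _ ⟨mderiv m' H, ⟨monomial m' 1, ?_⟩, rfl⟩
      rw [show DOpL H (monomial m' 1) = diffOp (monomial m' 1) H from rfl, diffOp_monomial,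
        one_smul]
    · rw [mderiv_rename_succ_eq_zero hm0, smul_zero]
      exact Submodule.zero_mem _
  · rintro y ⟨x, ⟨Θ, rfl⟩, rfl⟩
    refine ⟨rename Fin.succ Θ, ?_⟩
    show diffOp (rename Fin.succ Θ) (rename Fin.succ H) = renSucc p (DOpL H Θ)
    rw [diffOp_rename (Fin.succ_injective p)]
    rfl

lemma apolar_eq_up (H : MvPolynomial (Fin p) ℂ) :
    apolarLength H =
      Module.finrank ℂ (LinearMap.range (DOpL (rename Fin.succ H))) := by
  rw [apolarLength_eq, range_DOpL_rename]
  exact LinearEquiv.finrank_eq (Submodule.equivMapOfInjective (renSucc p)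
    (MvPolynomial.rename_injective _ (Fin.succ_injective p)) _)
end Chunk6

section Chunk7
variable {σ : Type*}

/-- evaluation as a linear map -/
noncomputable def evalL (w : σ → ℂ) : MvPolynomial σ ℂ →ₗ[ℂ] ℂ where
  toFun := eval w
  map_add' := by simp
  map_smul' := by
    intro t Ψ
    simp [MvPolynomial.smul_eq_C_mul]

lemma eval_homog_smul [Fintype σ] {Ψ : MvPolynomial σ ℂ} {k : ℕ} (h : Ψ.IsHomogeneous k)
    (t : ℂ) (w : σ → ℂ) : eval (t • w) Ψ = t ^ k * eval w Ψ := by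
  rw [eval_eq', eval_eq', Finset.mul_sum]
  apply Finset.sum_congr rfl
  intro m hm
  have hdeg := isHom_support_deg h (MvPolynomial.mem_support_iff.mp hm)
  have h1 : ∀ i, (t • w) i ^ m i = t ^ m i * w i ^ m i := by
    intro i; rw [Pi.smul_apply, smul_eq_mul, mul_pow]
  rw [Finset.prod_congr rfl fun i _ => h1 i, Finset.prod_mul_distrib,
    Finset.prod_pow_eq_pow_sum, hdeg]
  ring

lemma diffOp_homog_pow [Fintype σ] {Ψ : MvPolynomial σ ℂ} {s : ℕ} (h : Ψ.IsHomogeneous s)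
    (v : σ → ℂ) (d : ℕ) :
    diffOp Ψ ((∑ j, v j • X j) ^ d)
      = (Nat.descFactorial d s : ℂ) • (eval v Ψ • (∑ j, v j • X j) ^ (d - s)) := by
  rw [diffOp, MvPolynomial.sum_def]
  conv_rhs => rw [smul_smul, eval_eq', Finset.mul_sum, Finset.sum_smul]
  apply Finset.sum_congr rfl
  intro m hm
  rw [mderiv_pow_linear v s m (isHom_support_deg h (MvPolynomial.mem_support_iff.mp hm)) d,
    smul_smul, smul_smul]
  congr 1
  ring

lemma diffOp_homog_eq_zero [Fintype σ] {G : MvPolynomial σ ℂ} {e : ℕ} (hG : G.IsHomogeneous e)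
    {Θ : MvPolynomial σ ℂ} {k : ℕ} (hΘ : Θ.IsHomogeneous k) (h : e < k) : diffOp Θ G = 0 := by
  rw [diffOp, MvPolynomial.sum_def]
  apply Finset.sum_eq_zero
  intro m hm
  rw [mderiv_eq_zero_of_degree_lt hG (by
    rw [isHom_support_deg hΘ (MvPolynomial.mem_support_iff.mp hm)]; exact h), smul_zero]

/-- the summation map `u ↦ ∑ u i • L i ^ e'` -/
noncomputable def sigL [Fintype σ] (r : ℕ) (w : Fin r → σ → ℂ) (e' : ℕ) :
    (Fin r → ℂ) →ₗ[ℂ] MvPolynomial σ ℂ where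
  toFun u := ∑ i, u i • (∑ j, w i j • X j) ^ e'
  map_add' u u' := by
    simp [add_smul, Finset.sum_add_distrib]
  map_smul' t u := by
    simp [Finset.smul_sum, smul_smul]

/-- the twisted evaluation map -/
noncomputable def phiL (r : ℕ) (cc : Fin r → ℂ) (w : Fin r → σ → ℂ) :
    MvPolynomial σ ℂ →ₗ[ℂ] (Fin r → ℂ) :=
  LinearMap.pi fun i => cc i • evalL (w i)

lemma phiL_apply (r : ℕ) (cc : Fin r → ℂ) (w : Fin r → σ → ℂ)
    (Ψ : MvPolynomial σ ℂ) (i : Fin r) :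
    phiL r cc w Ψ i = cc i * eval (w i) Ψ := rfl

lemma phiL_mul_X (r : ℕ) (cc : Fin r → ℂ) (w : Fin r → σ → ℂ) (x : σ)
    (hw : ∀ i, w i x = 1) (Ψ : MvPolynomial σ ℂ) :
    phiL r cc w (Ψ * X x) = phiL r cc w Ψ := by
  funext i
  rw [phiL_apply, phiL_apply, map_mul, eval_X, hw i, mul_one]

end Chunk7

section Chunk8
/-- normalized points: scale each `v i` to have first coordinate `1` (junk if impossible) -/
noncomputable def normW (r : ℕ) {n : ℕ} (v : Fin r → Fin (n+1) → ℂ) : Fin r → Fin (n+1) → ℂ :=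
  fun i => if v i 0 = 0 then (fun x => if x = 0 then 1 else 0) else (v i 0)⁻¹ • v i

/-- normalized coefficients -/
noncomputable def normC (d r : ℕ) {n : ℕ} (c : Fin r → ℂ) (v : Fin r → Fin (n+1) → ℂ) :
    Fin r → ℂ :=
  fun i => if v i 0 = 0 then 0 else c i * (v i 0) ^ d

lemma normW_zero (r : ℕ) {n : ℕ} (v : Fin r → Fin (n+1) → ℂ) (i : Fin r) :
    normW r v i 0 = 1 := by
  unfold normW
  split_ifs with h
  · simp
  · simp [inv_mul_cancel₀ h]

lemma key_identity {p d a : ℕ} (ha : 1 ≤ a) {r : ℕ} (c : Fin r → ℂ)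
    (v : Fin r → Fin (p+1) → ℂ) {F : MvPolynomial (Fin (p+1)) ℂ}
    (hFr : F = ∑ i, c i • (∑ j, v i j • X j) ^ d)
    {k : ℕ} (hk : a + k ≤ d) {Ψ : MvPolynomial (Fin (p+1)) ℂ} (hΨ : Ψ.IsHomogeneous k) :
    diffOp (X 0 ^ a * Ψ) F = (Nat.descFactorial d (a + k) : ℂ) •
      sigL r (normW r v) (d - a - k) (phiL r (normC d r c v) (normW r v) Ψ) := by
  have hXΨ : (X (0 : Fin (p+1)) ^ a * Ψ).IsHomogeneous (a + k) :=
    (isHomogeneous_X_pow (R := ℂ) 0 a).mul hΨ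
  rw [hFr, diffOp_right_sum]
  have hsig : sigL r (normW r v) (d - a - k) (phiL r (normC d r c v) (normW r v) Ψ)
      = ∑ i, (normC d r c v i * eval (normW r v i) Ψ) •
          (∑ j, normW r v i j • X j) ^ (d - a - k) := rfl
  rw [hsig, Finset.smul_sum]
  apply Finset.sum_congr rfl
  intro i _
  rw [diffOp_right_smul, diffOp_homog_pow hXΨ (v i) d,
    show d - (a + k) = d - a - k from by omega]
  by_cases h0 : v i 0 = 0
  · have h1 : eval (v i) (X 0 ^ a * Ψ) = 0 := by
      rw [map_mul, map_pow, eval_X, h0, zero_pow (by omega), zero_mul]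
    have h2 : normC d r c v i = 0 := by simp [normC, h0]
    rw [h1, h2]
    simp
  · set t := v i 0 with ht
    have hw : normW r v i = t⁻¹ • v i := by
      unfold normW
      rw [if_neg h0]
    have hv : v i = t • normW r v i := by rw [hw, smul_inv_smul₀ h0]
    have hL : (∑ j, v i j • X j) = t • ∑ j, normW r v i j • (X j : MvPolynomial (Fin (p+1)) ℂ) := by
      rw [Finset.smul_sum]
      apply Finset.sum_congr rfl
      intro j _
      rw [smul_smul]
      congr 1
      conv_lhs => rw [hv]
      rw [Pi.smul_apply, smul_eq_mul]
    have hEv : eval (v i) Ψ = t ^ k * eval (normW r v i) Ψ := by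
      conv_lhs => rw [hv]
      rw [eval_homog_smul hΨ]
    have hEvX : eval (v i) (X 0 ^ a * Ψ) = t ^ a * eval (v i) Ψ := by
      rw [map_mul, map_pow, eval_X]
    have hC : normC d r c v i = c i * t ^ d := by unfold normC; rw [if_neg h0]
    rw [hEvX, hEv, hL, smul_pow, hC, smul_smul, smul_smul, smul_smul, smul_smul]
    congr 1
    have hpow : (t : ℂ) ^ a * (t ^ k * t ^ (d - a - k)) = t ^ d := by
      rw [← pow_add, ← pow_add]
      congr 1
      omega
    linear_combination (Nat.descFactorial d (a + k) : ℂ) * c i * eval (normW r v i) Ψ * hpow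
end Chunk8

section Chunk9
open Module

lemma finrank_map_add_finrank_le {M N : Type*} [AddCommGroup M] [Module ℂ M]
    [AddCommGroup N] [Module ℂ N] [FiniteDimensional ℂ M]
    (A B : Submodule ℂ M) (T : M →ₗ[ℂ] N) (hAB : A ≤ B) (hker : A ≤ LinearMap.ker T) :
    finrank ℂ (Submodule.map T B) + finrank ℂ A ≤ finrank ℂ B := by
  classical
  have h1 := LinearMap.finrank_range_add_finrank_ker (T.domRestrict B)
  rw [LinearMap.range_domRestrict] at h1
  have h2 : finrank ℂ A ≤ finrank ℂ (LinearMap.ker (T.domRestrict B)) := by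
    have he : finrank ℂ A = finrank ℂ (Submodule.comap B.subtype A) :=
      (Submodule.comapSubtypeEquivOfLe hAB).finrank_eq.symm
    rw [he]
    apply Submodule.finrank_mono
    intro x hx
    rw [LinearMap.mem_ker, LinearMap.domRestrict_apply]
    exact hker (Submodule.mem_comap.mp hx)
  omega

lemma finrank_finset_sup_le {ι M : Type*} [AddCommGroup M] [Module ℂ M] [DecidableEq ι]
    (s : Finset ι) (f : ι → Submodule ℂ M) (hf : ∀ i, FiniteDimensional ℂ (f i)) :
    FiniteDimensional ℂ ↥(s.sup f) ∧
      finrank ℂ ↥(s.sup f) ≤ ∑ i ∈ s, finrank ℂ (f i) := by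
  classical
  induction s using Finset.induction_on with
  | empty =>
    constructor
    · rw [Finset.sup_empty]
      infer_instance
    · rw [Finset.sup_empty, Finset.sum_empty]
      simp [finrank_bot]
  | @insert a s ha ih =>
    obtain ⟨ih1, ih2⟩ := ih
    haveI := ih1
    haveI := hf a
    rw [Finset.sup_insert, Finset.sum_insert ha]
    constructor
    · infer_instance
    · exact le_trans (Submodule.finrank_add_le_finrank_add_finrank _ _)
        (by omega)
end Chunk9

section Chunk10
open Module

set_option maxHeartbeats 1000000 in
set_option synthInstance.maxHeartbeats 200000 in
lemma main_bound {p d a : ℕ} (ha : 1 ≤ a) (had : a ≤ d) {H K : MvPolynomial (Fin p) ℂ}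
    (hHd : H.IsHomogeneous (d - a)) {F : MvPolynomial (Fin (p+1)) ℂ}
    (hF : F = X 0 ^ a * rename Fin.succ H + rename Fin.succ K)
    {r : ℕ} (c : Fin r → ℂ) (v : Fin r → Fin (p+1) → ℂ)
    (hFr : F = ∑ i, c i • (∑ j, v i j • X j) ^ d) :
    apolarLength H ≤ r := by
  classical
  set w := normW r v with hwdef
  set cc := normC d r c v with hccdef
  set φ := phiL r cc w with hφdef
  set Hh := rename (Fin.succ : Fin p → Fin (p+1)) H with hHhdef
  have hHhom : Hh.IsHomogeneous (d - a) := hHd.rename_isHomogeneous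
  set E : ℕ → Submodule ℂ (Fin r → ℂ) :=
    fun k => Submodule.map φ (homogeneousSubmodule (Fin (p+1)) ℂ k) with hE
  set Im : ℕ → Submodule ℂ (MvPolynomial (Fin (p+1)) ℂ) :=
    fun k => Submodule.map (sigL r w (d - a - k)) (E k) with hIm
  have hfinE : ∀ k, FiniteDimensional ℂ (E k) :=
    fun k => FiniteDimensional.finiteDimensional_submodule (E k)
  have hfinIm : ∀ k, FiniteDimensional ℂ (Im k) :=
    fun k => haveI := hfinE k; Module.Finite.map _ _
  -- membership
  have hmem : ∀ k, k ≤ d - a → ∀ Ψ : MvPolynomial (Fin (p+1)) ℂ, Ψ.IsHomogeneous k →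
      diffOp Ψ Hh ∈ Im k := by
    intro k hk Ψ hΨ
    have h1 : diffOp (X 0 ^ a * Ψ) F = (a.factorial : ℂ) • diffOp Ψ Hh := diffOp_xpow_a ha hF Ψ
    have h2 := key_identity ha c v hFr (k := k) (by omega) hΨ
    have hfac : (a.factorial : ℂ) ≠ 0 := Nat.cast_ne_zero.mpr (Nat.factorial_ne_zero a)
    have h3 : diffOp Ψ Hh = ((a.factorial : ℂ)⁻¹ * (Nat.descFactorial d (a + k) : ℂ)) •
        sigL r w (d - a - k) (φ Ψ) := by
      rw [mul_smul, ← h2, h1, inv_smul_smul₀ hfac]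
    rw [h3]
    exact Submodule.smul_mem _ _
      (Submodule.mem_map_of_mem (Submodule.mem_map_of_mem hΨ))
  -- range ≤ sup
  have hrange : LinearMap.range (DOpL Hh) ≤ (Finset.range (d - a + 1)).sup Im := by
    rintro y ⟨Θ, rfl⟩
    show diffOp Θ Hh ∈ _
    have hdec : diffOp Θ Hh = ∑ k ∈ Finset.range (Θ.totalDegree + 1),
        diffOp (homogeneousComponent k Θ) Hh := by
      conv_lhs => rw [← sum_homogeneousComponent Θ]
      exact map_sum (DOpL Hh) (fun k => homogeneousComponent k Θ)
        (Finset.range (Θ.totalDegree + 1))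
    rw [hdec]
    apply Submodule.sum_mem
    intro k _
    by_cases hk : k ≤ d - a
    · exact Finset.le_sup (f := Im) (Finset.mem_range.mpr (by omega))
        (hmem k hk _ (homogeneousComponent_isHomogeneous k Θ))
    · rw [diffOp_homog_eq_zero hHhom (homogeneousComponent_isHomogeneous k Θ) (by omega)]
      exact Submodule.zero_mem _
  -- E monotone
  have hEmono : ∀ k, E k ≤ E (k + 1) := by
    intro k u hu
    obtain ⟨Ψ, hΨ, rfl⟩ := hu
    rw [show φ Ψ = φ (Ψ * X 0) from
      (phiL_mul_X r cc w 0 (fun i => normW_zero r v i) Ψ).symm]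
    exact Submodule.mem_map_of_mem
      (((mem_homogeneousSubmodule _ _).mp hΨ).mul (isHomogeneous_X _ 0))
  -- kernel
  have hker : ∀ k, k + 1 ≤ d - a → E k ≤ LinearMap.ker (sigL r w (d - a - (k+1))) := by
    intro k hk u hu
    obtain ⟨Ψ, hΨ, rfl⟩ := hu
    rw [LinearMap.mem_ker]
    have hΨ' : (Ψ * X 0).IsHomogeneous (k+1) :=
      ((mem_homogeneousSubmodule _ _).mp hΨ).mul (isHomogeneous_X _ 0)
    have h2 := key_identity ha c v hFr (k := k+1) (by omega) hΨ'
    have h0 : (X 0 : MvPolynomial (Fin (p+1)) ℂ) ^ a * (Ψ * X 0) = X 0 ^ (a + 1) * Ψ := by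
      ring
    rw [h0, diffOp_xpow_a1 hF, phiL_mul_X r cc w 0 (fun i => normW_zero r v i) Ψ] at h2
    have hdf : (Nat.descFactorial d (a + (k+1)) : ℂ) ≠ 0 := by
      rw [Nat.cast_ne_zero]
      intro hz
      have := Nat.descFactorial_eq_zero_iff_lt.mp hz
      omega
    rcases smul_eq_zero.mp h2.symm with h | h
    · exact absurd h hdf
    · exact h
  -- telescope
  have htel : ∀ N, N + 1 ≤ d - a + 1 →
      (∑ k ∈ Finset.range (N + 1), finrank ℂ (Im k)) ≤ finrank ℂ (E N) := by
    intro N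
    induction N with
    | zero =>
      intro _
      rw [Finset.range_one, Finset.sum_singleton]
      haveI := hfinE 0
      exact Submodule.finrank_map_le _ _
    | succ N ih =>
      intro hN
      rw [Finset.sum_range_succ]
      have h1 : finrank ℂ (Im (N+1)) + finrank ℂ (E N) ≤ finrank ℂ (E (N+1)) :=
        finrank_map_add_finrank_le (E N) (E (N+1)) (sigL r w (d - a - (N+1)))
          (hEmono N) (hker N (by omega))
      have h2 := ih (by omega)
      omega
  -- conclude
  have hEr : finrank ℂ (E (d - a)) ≤ r := by
    have h := Submodule.finrank_le (E (d - a))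
    rwa [Module.finrank_fin_fun] at h
  obtain ⟨hsupFin, hsup⟩ := finrank_finset_sup_le (Finset.range (d - a + 1)) Im hfinIm
  haveI := hsupFin
  have hfinal : finrank ℂ (LinearMap.range (DOpL Hh)) ≤ r :=
    calc finrank ℂ (LinearMap.range (DOpL Hh))
        ≤ finrank ℂ ↥((Finset.range (d - a + 1)).sup Im) := Submodule.finrank_mono hrange
      _ ≤ ∑ k ∈ Finset.range (d - a + 1), finrank ℂ (Im k) := hsup
      _ ≤ finrank ℂ (E (d - a)) := htel (d - a) le_rfl
      _ ≤ r := hEr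
  rw [hHhdef] at hfinal
  rw [apolar_eq_up H]
  exact hfinal
end Chunk10

section Chunk11
open Module

lemma linear_isHomogeneous {n : ℕ} (v : Fin n → ℂ) :
    (∑ j, v j • X j : MvPolynomial (Fin n) ℂ).IsHomogeneous 1 := by
  rw [← mem_homogeneousSubmodule]
  exact Submodule.sum_mem _ fun j _ => Submodule.smul_mem _ _
    ((mem_homogeneousSubmodule _ _).mpr (isHomogeneous_X _ j))

lemma pow_linear_isHomogeneous {n d : ℕ} (v : Fin n → ℂ) :
    ((∑ j, v j • X j : MvPolynomial (Fin n) ℂ) ^ d).IsHomogeneous d := by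
  simpa using (linear_isHomogeneous v).pow d

lemma coeff_pow_linear {n d : ℕ} (v : Fin n → ℂ) (u : Fin n →₀ ℕ) (hu : (∑ i, u i) = d) :
    coeff u ((∑ j, v j • X j) ^ d)
      = ((d.factorial : ℂ) / ∏ i, ((u i).factorial : ℂ)) * ∏ j, v j ^ u j := by
  classical
  have h1 : coeff 0 (mderiv u ((∑ j, v j • X j) ^ d))
      = (∏ i, ((u i).factorial : ℂ)) * coeff u ((∑ j, v j • X j) ^ d) := by
    rw [coeff_mderiv, zero_add]
    congr 1
    rw [← Finset.prod_subset (Finset.subset_univ u.support) (fun i _ hi => by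
      rw [Finsupp.notMem_support_iff.mp hi]
      simp)]
    exact Finset.prod_congr rfl fun i _ => by rw [Nat.descFactorial_self]
  have h2 : mderiv u ((∑ j, v j • X j) ^ d)
      = (d.factorial : ℂ) • ((∏ i, v i ^ u i) • ((1 : MvPolynomial (Fin n) ℂ))) := by
    rw [mderiv_pow_linear v d u hu d, Nat.descFactorial_self, Nat.sub_self, pow_zero]
  rw [h2] at h1
  have h3 : coeff 0 ((d.factorial : ℂ) • ((∏ i, v i ^ u i) • (1 : MvPolynomial (Fin n) ℂ)))
      = (d.factorial : ℂ) * ∏ i, v i ^ u i := by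
    rw [coeff_smul, coeff_smul, coeff_zero_one]
    simp [smul_eq_mul]
  rw [h3] at h1
  have hne : (∏ i, ((u i).factorial : ℂ)) ≠ 0 := by
    rw [Finset.prod_ne_zero_iff]
    exact fun i _ => Nat.cast_ne_zero.mpr (Nat.factorial_ne_zero _)
  field_simp
  linear_combination h1.symm

set_option maxHeartbeats 1000000 in
set_option synthInstance.maxHeartbeats 400000 in
lemma homog_mem_span_powers {n d : ℕ} {G : MvPolynomial (Fin n) ℂ} (hG : G.IsHomogeneous d) :
    G ∈ Submodule.span ℂ
      (Set.range fun v : Fin n → ℂ => ((∑ j, v j • X j) ^ d : MvPolynomial (Fin n) ℂ)) := by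
  classical
  set W := Submodule.span ℂ
    (Set.range fun v : Fin n → ℂ => ((∑ j, v j • X j) ^ d : MvPolynomial (Fin n) ℂ)) with hW
  set T : Finset (Fin n →₀ ℕ) := Finset.finsuppAntidiag (Finset.univ : Finset (Fin n)) d with hT
  have hmemT : ∀ u : Fin n →₀ ℕ, u ∈ T ↔ (∑ i, u i) = d := by
    intro u
    rw [hT, Finset.mem_finsuppAntidiag]
    constructor
    · rintro ⟨h1, -⟩; exact h1
    · intro h1; exact ⟨h1, Finset.subset_univ _⟩
  suffices hmono : ∀ m : Fin n →₀ ℕ, (∑ i, m i) = d → monomial m (1 : ℂ) ∈ W by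
    rw [show G = ∑ m ∈ G.support, monomial m (coeff m G) from (support_sum_monomial_coeff G).symm]
    apply Submodule.sum_mem
    intro m hm
    rw [show monomial m (coeff m G) = coeff m G • monomial m (1:ℂ) by
      rw [MvPolynomial.smul_monomial, smul_eq_mul, mul_one]]
    exact Submodule.smul_mem _ _
      (hmono m (isHom_support_deg hG (MvPolynomial.mem_support_iff.mp hm)))
  intro m hmdeg
  by_contra hnot
  have hq : W.mkQ (monomial m 1) ≠ 0 := by
    rw [Submodule.mkQ_apply, Ne, Submodule.Quotient.mk_eq_zero]
    exact hnot
  obtain ⟨g, hg⟩ : ∃ g : Module.Dual ℂ (MvPolynomial (Fin n) ℂ ⧸ W),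
      g (W.mkQ (monomial m 1)) ≠ 0 := by
    by_contra hall
    push_neg at hall
    exact hq ((Module.forall_dual_apply_eq_zero_iff ℂ _).mp hall)
  set f : MvPolynomial (Fin n) ℂ →ₗ[ℂ] ℂ := g ∘ₗ W.mkQ with hf
  have hfW : ∀ x ∈ W, f x = 0 := by
    intro x hx
    rw [hf, LinearMap.comp_apply, Submodule.mkQ_apply,
      (Submodule.Quotient.mk_eq_zero W).mpr hx, map_zero]
  -- expansion of powers over T
  have hexp : ∀ v : Fin n → ℂ, ((∑ j, v j • X j) ^ d : MvPolynomial (Fin n) ℂ)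
      = ∑ u ∈ T, (((d.factorial : ℂ) / ∏ i, ((u i).factorial : ℂ)) * ∏ j, v j ^ u j)
          • monomial u 1 := by
    intro v
    apply MvPolynomial.ext
    intro u'
    rw [coeff_sum]
    by_cases hu' : u' ∈ T
    · rw [Finset.sum_eq_single u' (fun b _ hb => by
        rw [coeff_smul, coeff_monomial, if_neg hb, smul_zero]) (fun h => absurd hu' h)]
      rw [coeff_smul, coeff_monomial, if_pos rfl, smul_eq_mul, mul_one,
        coeff_pow_linear v u' ((hmemT u').mp hu')]
    · trans (0 : ℂ)
      · refine (pow_linear_isHomogeneous v).coeff_eq_zero ?_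
        rw [degree_eq_fintype_sum]
        exact fun hc => hu' ((hmemT u').mpr hc)
      · symm
        apply Finset.sum_eq_zero
        intro b hb
        rw [coeff_smul, coeff_monomial, if_neg (show b ≠ u' from fun hbu => hu' (hbu ▸ hb)), smul_zero]
  set Qp : MvPolynomial (Fin n) ℂ := ∑ u ∈ T,
    monomial u (((d.factorial : ℂ) / ∏ i, ((u i).factorial : ℂ)) * f (monomial u 1)) with hQp
  have hev : ∀ v : Fin n → ℂ, eval v Qp = 0 := by
    intro v
    have h3 : f ((∑ j, v j • X j) ^ d) = 0 :=
      hfW _ (Submodule.subset_span ⟨v, rfl⟩)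
    rw [hexp v, map_sum] at h3
    rw [hQp, map_sum, ← h3]
    apply Finset.sum_congr rfl
    intro u _
    rw [eval_monomial, map_smul, smul_eq_mul, Finsupp.prod_pow]
    ring
  have hQ0 : Qp = 0 := MvPolynomial.funext fun x => by rw [hev x, map_zero]
  have hcm : coeff m Qp = ((d.factorial : ℂ) / ∏ i, ((m i).factorial : ℂ)) * f (monomial m 1) := by
    rw [hQp, coeff_sum, Finset.sum_eq_single m (fun b _ hb => by
      rw [coeff_monomial, if_neg hb]) (fun h => absurd ((hmemT m).mpr hmdeg) h)]
    rw [coeff_monomial, if_pos rfl]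
  rw [hQ0, coeff_zero] at hcm
  have hne : (∏ i, ((m i).factorial : ℂ)) ≠ 0 := by
    rw [Finset.prod_ne_zero_iff]
    exact fun i _ => Nat.cast_ne_zero.mpr (Nat.factorial_ne_zero _)
  have hfm : f (monomial m 1) = 0 := by
    have hd0 : (d.factorial : ℂ) ≠ 0 := Nat.cast_ne_zero.mpr (Nat.factorial_ne_zero _)
    have hb0 : ((d.factorial : ℂ) / ∏ i, ((m i).factorial : ℂ)) ≠ 0 := div_ne_zero hd0 hne
    rcases mul_eq_zero.mp hcm.symm with h | h
    · exact absurd h hb0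
    · exact h
  exact hg hfm
end Chunk11


end Aux

/-- For `F = x^a·H(y) + K(y)` with `H` nonzero homogeneous of degree `d − a` and `K`
homogeneous of degree `d` in the `y`-variables only: if `F ≠ 0` then `r(F) ≥ al(H)`. -/
theorem stmt9 (p d a : ℕ) (ha : 1 ≤ a) (had : a ≤ d)
    (H : MvPolynomial (Fin p) ℂ) (hH : H ≠ 0) (hHd : H.IsHomogeneous (d - a))
    (K : MvPolynomial (Fin p) ℂ) (hK : K.IsHomogeneous d)
    (F : MvPolynomial (Fin (p + 1)) ℂ)
    (hF : F = X 0 ^ a * rename Fin.succ H + rename Fin.succ K)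
    (hF0 : F ≠ 0) :
    apolarLength H ≤ waringRank d F := by
  classical
  have hFhom : F.IsHomogeneous d := by
    have h1 : (X (0 : Fin (p+1)) ^ a * rename Fin.succ H).IsHomogeneous d := by
      have h := (isHomogeneous_X_pow (R := ℂ) (0 : Fin (p+1)) a).mul (hHd.rename_isHomogeneous (f := Fin.succ))
      rwa [show a + (d - a) = d from by omega] at h
    have h2 : (rename (Fin.succ : Fin p → Fin (p+1)) K).IsHomogeneous d :=
      hK.rename_isHomogeneous
    rw [hF, ← mem_homogeneousSubmodule]
    exact Submodule.add_mem _ ((mem_homogeneousSubmodule _ _).mpr h1)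
      ((mem_homogeneousSubmodule _ _).mpr h2)
  have hmem : F ∈ Submodule.span ℂ
      (Set.range fun v : Fin (p+1) → ℂ => ((∑ j, v j • X j) ^ d : MvPolynomial (Fin (p+1)) ℂ)) :=
    homog_mem_span_powers hFhom
  rw [Finsupp.mem_span_range_iff_exists_finsupp] at hmem
  obtain ⟨cf, hcf⟩ := hmem
  set s := cf.support with hs
  set r0 := s.card with hr0
  set eqv := s.equivFin with heqv
  set cfun : Fin r0 → ℂ := fun i => cf (eqv.symm i) with hcfun
  set vfun : Fin r0 → (Fin (p+1) → ℂ) := fun i => (eqv.symm i : Fin (p+1) → ℂ) with hvfun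
  have hdecomp : F = ∑ i, cfun i • (∑ j, vfun i j • X j) ^ d := by
    have h1 : cf.sum (fun v aa => aa • ((∑ j, v j • X j) ^ d : MvPolynomial (Fin (p+1)) ℂ))
        = ∑ x ∈ s, cf x • ((∑ j, x j • X j) ^ d : MvPolynomial (Fin (p+1)) ℂ) := rfl
    have h2 : (∑ x ∈ s, cf x • ((∑ j, x j • X j) ^ d : MvPolynomial (Fin (p+1)) ℂ))
        = ∑ x : s, cf (x : Fin (p+1) → ℂ) •
            ((∑ j, (x : Fin (p+1) → ℂ) j • X j) ^ d : MvPolynomial (Fin (p+1)) ℂ) :=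
      (Finset.sum_coe_sort s _).symm
    have h3 : (∑ x : s, cf (x : Fin (p+1) → ℂ) •
            ((∑ j, (x : Fin (p+1) → ℂ) j • X j) ^ d : MvPolynomial (Fin (p+1)) ℂ))
        = ∑ i, cfun i • (∑ j, vfun i j • X j) ^ d :=
      (Equiv.sum_comp eqv.symm (fun x : s => cf (x : Fin (p+1) → ℂ) •
        ((∑ j, (x : Fin (p+1) → ℂ) j • X j) ^ d : MvPolynomial (Fin (p+1)) ℂ))).symm
    rw [← hcf, h1, h2, h3]
  have hS : waringRank d F ∈ {r : ℕ | ∃ (c : Fin r → ℂ) (v : Fin r → Fin (p+1) → ℂ),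
      F = ∑ i, c i • (∑ j, v i j • MvPolynomial.X j) ^ d} :=
    Nat.sInf_mem ⟨r0, cfun, vfun, hdecomp⟩
  obtain ⟨c, v, hFr⟩ := hS
  exact main_bound ha had hHd hF c v hFr
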